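/- Let X be an infinite-dimensional complex Banach space, T a bounded linear operator on X, and b > 1. Suppose x ∈ X is [1,b]𝕋-supercyclic for T and the closure of Orb(𝕋x,T) intersected with [1,b]𝕋x equals 𝕋x ∪ b𝕋x. Then every vector y ∈ X that is [1,b]𝕋-supercyclic for T satisfies: the closure of Orb(𝕋y,T) intersected with {t·y : t ∈ ℝ, t > 0} equals {b^n·y : n ∈ ℤ}. -/
import Mathlib

open Set Filter Topology

section AnnulusHelpers

variable {X : Type*} [NormedAddCommGroup X] [NormedSpace ℂ X]

/-- The `𝕋`-orbit of `v` under `T`. -/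
private def Orb (T : X →L[ℂ] X) (v : X) : Set X :=
  {w : X | ∃ z : ℂ, ‖z‖ = 1 ∧ ∃ n : ℕ, w = z • (T ^ n) v}

/-- The closure of the `𝕋`-orbit. -/
private def Ecl (T : X →L[ℂ] X) (v : X) : Set X := closure (Orb T v)

variable {T : X →L[ℂ] X}

private lemma smul_mem_Ecl_smul (c : ℂ) {v w : X} (hw : w ∈ Ecl T v) :
    c • w ∈ Ecl T (c • v) := by
  have h1 : (fun u : X => c • u) '' Orb T v ⊆ Orb T (c • v) := by
    rintro _ ⟨u, ⟨z, hz, n, rfl⟩, rfl⟩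
    exact ⟨z, hz, n, by rw [map_smul, smul_comm]⟩
  have h2 := image_closure_subset_closure_image (continuous_const_smul c) (s := Orb T v)
  exact closure_mono h1 (h2 ⟨w, hw, rfl⟩)

private lemma apply_mem_Ecl {v w : X} (hw : w ∈ Ecl T v) : T w ∈ Ecl T v := by
  have h1 : (fun u : X => T u) '' Orb T v ⊆ Orb T v := by
    rintro _ ⟨u, ⟨z, hz, n, rfl⟩, rfl⟩
    refine ⟨z, hz, n + 1, ?_⟩
    show T (z • (T ^ n) v) = z • (T ^ (n + 1)) v
    rw [map_smul, pow_succ', ContinuousLinearMap.mul_apply]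
  have h2 := image_closure_subset_closure_image T.continuous (s := Orb T v)
  exact closure_mono h1 (h2 ⟨w, hw, rfl⟩)

private lemma unit_smul_mem_Ecl {z : ℂ} (hz : ‖z‖ = 1) {v w : X} (hw : w ∈ Ecl T v) :
    z • w ∈ Ecl T v := by
  have h1 : (fun u : X => z • u) '' Orb T v ⊆ Orb T v := by
    rintro _ ⟨u, ⟨z', hz', n, rfl⟩, rfl⟩
    exact ⟨z * z', by rw [norm_mul, hz, hz', one_mul], n, by rw [mul_smul]⟩
  have h2 := image_closure_subset_closure_image (continuous_const_smul z) (s := Orb T v)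
  exact closure_mono h1 (h2 ⟨w, hw, rfl⟩)

private lemma Ecl_mono {v w : X} (hw : w ∈ Ecl T v) : Ecl T w ⊆ Ecl T v := by
  apply closure_minimal _ isClosed_closure
  rintro _ ⟨z, hz, n, rfl⟩
  apply unit_smul_mem_Ecl hz
  induction n with
  | zero => simpa using hw
  | succ k ih =>
      rw [pow_succ', ContinuousLinearMap.mul_apply]
      exact apply_mem_Ecl ih

private lemma smul_mem_Ecl {v : X} {c : ℂ} (hc : c • v ∈ Ecl T v) {w : X}
    (hw : w ∈ Ecl T v) : c • w ∈ Ecl T v :=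
  Ecl_mono hc (smul_mem_Ecl_smul c hw)

/-- From `[1,b]𝕋`-supercyclicity: every point can be scaled into the orbit closure. -/
private lemma exists_scale {b : ℝ} (hb : 1 < b) {v : X}
    (hv : Dense {w : X | ∃ t ∈ Set.Icc (1 : ℝ) b, ∃ z : ℂ, ‖z‖ = 1 ∧
      ∃ n : ℕ, w = ((t : ℂ) * z) • (T ^ n) v})
    (p : X) : ∃ t ∈ Set.Icc (1 : ℝ) b, ((t⁻¹ : ℝ) : ℂ) • p ∈ Ecl T v := by
  obtain ⟨u, humem, hulim⟩ := mem_closure_iff_seq_limit.1 (hv p)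
  choose t ht z hz n hn using humem
  obtain ⟨t₀, ht₀, φ, hφ, hlim⟩ := isCompact_Icc.tendsto_subseq ht
  refine ⟨t₀, ht₀, ?_⟩
  have ht₀pos : (0 : ℝ) < t₀ := lt_of_lt_of_le one_pos ht₀.1
  have htpos : ∀ k, (0 : ℝ) < t k := fun k => lt_of_lt_of_le one_pos (ht k).1
  have hmem : ∀ k, (((t (φ k))⁻¹ : ℝ) : ℂ) • u (φ k) ∈ Orb T v := by
    intro k
    refine ⟨z (φ k), hz (φ k), n (φ k), ?_⟩
    rw [hn (φ k), ← smul_assoc, smul_eq_mul]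
    congr 1
    have h0 : (t (φ k) : ℂ) ≠ 0 := by exact_mod_cast (htpos (φ k)).ne'
    push_cast
    field_simp
  have h1 : Tendsto (fun k => (((t (φ k))⁻¹ : ℝ) : ℂ)) atTop (𝓝 ((t₀⁻¹ : ℝ) : ℂ)) := by
    push_cast
    exact ((Complex.continuous_ofReal.tendsto t₀).comp hlim).inv₀
      (by exact_mod_cast ht₀pos.ne')
  have hten : Tendsto (fun k => (((t (φ k))⁻¹ : ℝ) : ℂ) • u (φ k)) atTop
      (𝓝 (((t₀⁻¹ : ℝ) : ℂ) • p)) := h1.smul (hulim.comp hφ.tendsto_atTop)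
  exact mem_closure_of_tendsto hten (Eventually.of_forall hmem)

private lemma zpow_floor_logb_le {b s : ℝ} (hb : 1 < b) (hs : 0 < s) :
    b ^ ⌊Real.logb b s⌋ ≤ s ∧ s < b ^ (⌊Real.logb b s⌋ + 1) := by
  have hb0 : (0 : ℝ) < b := lt_trans one_pos hb
  have hlogb : b ^ Real.logb b s = s := Real.rpow_logb hb0 hb.ne' hs
  constructor
  · calc b ^ ⌊Real.logb b s⌋ = b ^ ((⌊Real.logb b s⌋ : ℝ)) := (Real.rpow_intCast b _).symm
      _ ≤ b ^ Real.logb b s := Real.rpow_le_rpow_of_exponent_le hb.le (Int.floor_le _)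
      _ = s := hlogb
  · calc s = b ^ Real.logb b s := hlogb.symm
      _ < b ^ (((⌊Real.logb b s⌋ + 1 : ℤ) : ℝ)) := by
          apply Real.rpow_lt_rpow_of_exponent_lt hb
          push_cast
          exact Int.lt_floor_add_one _
      _ = b ^ (⌊Real.logb b s⌋ + 1) := Real.rpow_intCast b _

/-- The abstract semigroup argument. -/
private lemma semigroup_subset_zpow {b : ℝ} (hb : 1 < b) {Λ : ℝ → Prop}
    (hbmem : Λ b)
    (hmul : ∀ s u : ℝ, Λ s → Λ u → Λ (s * u))
    (htrap : ∀ s : ℝ, 1 ≤ s → s ≤ b → Λ s → s = 1 ∨ s = b)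
    (hP : ∀ s : ℝ, 0 < s → ∃ τ : ℝ, 0 < τ ∧ s / b ≤ τ ∧ τ ≤ s ∧ Λ τ) :
    ∀ s : ℝ, 0 < s → Λ s → ∃ n : ℤ, s = b ^ n := by
  have hb0 : (0 : ℝ) < b := lt_trans one_pos hb
  -- b⁻¹ ∈ Λ
  have hinv : Λ b⁻¹ := by
    set s₀ : ℝ := (b⁻¹ + 1) / 2 with hs₀
    have hbinv1 : b⁻¹ < 1 := inv_lt_one_of_one_lt₀ hb
    have hs₀1 : s₀ < 1 := by rw [hs₀]; linarith
    have hs₀inv : b⁻¹ < s₀ := by rw [hs₀]; linarith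
    have hs₀pos : 0 < s₀ := lt_trans (inv_pos.2 hb0) hs₀inv
    obtain ⟨τ, hτ0, hτl, hτu, hτΛ⟩ := hP s₀ hs₀pos
    by_cases hcase : 1 ≤ τ * b
    · have h1 : τ * b ≤ b := by nlinarith
      rcases htrap (τ * b) hcase h1 (hmul τ b hτΛ hbmem) with h | h
      · have hτeq : τ = b⁻¹ := eq_inv_of_mul_eq_one_left h
        rwa [← hτeq]
      · exfalso
        have : τ = 1 := mul_right_cancel₀ hb0.ne' (h.trans (one_mul b).symm)
        rw [this] at hτu; linarith
    · push_neg at hcase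
      exfalso
      have hΛ2 : Λ (τ * b * b) := hmul _ b (hmul τ b hτΛ hbmem) hbmem
      have hs₀τ : s₀ ≤ τ * b := by
        rw [div_le_iff₀ hb0] at hτl; linarith
      have h3 : s₀ * b ≤ τ * b * b := by nlinarith
      have h4 : 1 < s₀ * b := by
        calc 1 = b⁻¹ * b := (inv_mul_cancel₀ hb0.ne').symm
          _ < s₀ * b := by gcongr
      have hlow : 1 < τ * b * b := lt_of_lt_of_le h4 h3
      have hhigh : τ * b * b < b := by nlinarith
      rcases htrap (τ * b * b) hlow.le hhigh.le hΛ2 with h | h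
      · linarith
      · linarith
  -- all integer powers of b are in Λ
  have h1mem : Λ 1 := by
    have := hmul b b⁻¹ hbmem hinv
    rwa [mul_inv_cancel₀ hb0.ne'] at this
  have hzpow : ∀ m : ℤ, Λ (b ^ m) := by
    have hpow : ∀ k : ℕ, Λ (b ^ k) := by
      intro k
      induction k with
      | zero => simpa using h1mem
      | succ j ih => rw [pow_succ]; exact hmul _ _ ih hbmem
    have hpowinv : ∀ k : ℕ, Λ (b⁻¹ ^ k) := by
      intro k
      induction k with
      | zero => simpa using h1mem
      | succ j ih => rw [pow_succ]; exact hmul _ _ ih hinv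
    intro m
    cases m with
    | ofNat k => simpa using hpow k
    | negSucc k => rw [zpow_negSucc, ← inv_pow]; exact hpowinv (k + 1)
  -- main conclusion
  intro s hs hΛs
  set n : ℤ := ⌊Real.logb b s⌋ with hn
  obtain ⟨hfl, hfu⟩ := zpow_floor_logb_le hb hs
  have hbn : (0 : ℝ) < b ^ n := zpow_pos hb0 n
  have hmem : Λ (s * b ^ (-n)) := hmul _ _ hΛs (hzpow (-n))
  have hrw : s * b ^ (-n) = s / b ^ n := by rw [zpow_neg, div_eq_mul_inv]
  have hlow : 1 ≤ s * b ^ (-n) := by rw [hrw, le_div_iff₀ hbn, one_mul]; exact hfl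
  have hhigh : s * b ^ (-n) ≤ b := by
    rw [hrw, div_le_iff₀ hbn]
    have hpow1 : b * b ^ n = b ^ (n + 1) := by rw [zpow_add_one₀ hb0.ne', mul_comm]
    rw [hpow1]
    exact hfu.le
  rcases htrap _ hlow hhigh hmem with h | h
  · refine ⟨n, ?_⟩
    rw [hrw, div_eq_one_iff_eq hbn.ne'] at h
    exact h
  · refine ⟨n + 1, ?_⟩
    rw [hrw, div_eq_iff hbn.ne'] at h
    rw [zpow_add_one₀ hb0.ne', mul_comm]
    exact h

/-- If `Λ ⊆ {b^n}` and `Λ` meets every interval `[s/b, s]`, then every `b^n ∈ Λ`. -/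
private lemma zpow_mem_of_P {b : ℝ} (hb : 1 < b) {Λ : ℝ → Prop}
    (hsub : ∀ s : ℝ, 0 < s → Λ s → ∃ n : ℤ, s = b ^ n)
    (hP : ∀ s : ℝ, 0 < s → ∃ τ : ℝ, 0 < τ ∧ s / b ≤ τ ∧ τ ≤ s ∧ Λ τ) :
    ∀ n : ℤ, Λ (b ^ n) := by
  have hb0 : (0 : ℝ) < b := lt_trans one_pos hb
  intro k
  set c : ℝ := (1 + b) / 2 with hc
  have hc1 : 1 < c := by rw [hc]; linarith
  have hcb : c < b := by rw [hc]; linarith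
  have hbk : (0 : ℝ) < b ^ k := zpow_pos hb0 k
  obtain ⟨τ, hτ0, hτl, hτu, hτΛ⟩ := hP (b ^ k * c) (by positivity)
  obtain ⟨j, rfl⟩ := hsub τ hτ0 hτΛ
  have hjk : j = k := by
    by_contra hne
    rcases lt_or_gt_of_ne hne with h | h
    · have h1 : b ^ k * c ≤ b ^ (j + 1) := by
        rw [div_le_iff₀ hb0] at hτl
        calc b ^ k * c ≤ b ^ j * b := hτl
          _ = b ^ (j + 1) := (zpow_add_one₀ hb0.ne' j).symm
      have h2 : b ^ (j + 1) ≤ b ^ k := zpow_le_zpow_right₀ hb.le (by omega)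
      nlinarith
    · have h1 : b ^ (k + 1) ≤ b ^ j := zpow_le_zpow_right₀ hb.le (by omega)
      have h2 : b ^ (k + 1) = b ^ k * b := zpow_add_one₀ hb0.ne' k
      nlinarith
  rw [hjk] at hτΛ
  exact hτΛ

end AnnulusHelpers

/-- **Lemma 3.10.** If `x` is `[1,b]𝕋`-supercyclic for `T` with
`closure(Orb(𝕋x,T)) ∩ [1,b]𝕋x = 𝕋x ∪ b𝕋x`, then every `[1,b]𝕋`-supercyclic vector `y`
satisfies `closure(Orb(𝕋y,T)) ∩ ℝ₊y = {b^n·y : n ∈ ℤ}`. -/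
theorem annulus_supercyclic_positive_multiples
    (X : Type*) [NormedAddCommGroup X] [NormedSpace ℂ X] [CompleteSpace X]
    (hX : ¬FiniteDimensional ℂ X) (T : X →L[ℂ] X) (b : ℝ) (hb : 1 < b)
    (x : X)
    (hx : Dense {y : X | ∃ t ∈ Set.Icc (1 : ℝ) b, ∃ z : ℂ, ‖z‖ = 1 ∧
      ∃ n : ℕ, y = ((t : ℂ) * z) • (T ^ n) x})
    (hexc : closure {y : X | ∃ z : ℂ, ‖z‖ = 1 ∧ ∃ n : ℕ, y = z • (T ^ n) x} ∩
        {y : X | ∃ t ∈ Set.Icc (1 : ℝ) b, ∃ z : ℂ, ‖z‖ = 1 ∧ y = ((t : ℂ) * z) • x} =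
      {y : X | ∃ z : ℂ, ‖z‖ = 1 ∧ y = z • x} ∪
        {y : X | ∃ z : ℂ, ‖z‖ = 1 ∧ y = ((b : ℂ) * z) • x}) :
    ∀ y : X,
      Dense {w : X | ∃ t ∈ Set.Icc (1 : ℝ) b, ∃ z : ℂ, ‖z‖ = 1 ∧
        ∃ n : ℕ, w = ((t : ℂ) * z) • (T ^ n) y} →
      closure {w : X | ∃ z : ℂ, ‖z‖ = 1 ∧ ∃ n : ℕ, w = z • (T ^ n) y} ∩
          {w : X | ∃ t : ℝ, 0 < t ∧ w = ((t : ℝ) : ℂ) • y} =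
        {w : X | ∃ n : ℤ, w = ((b ^ n : ℝ) : ℂ) • y} := by
  intro y hy
  have hb0 : (0 : ℝ) < b := lt_trans one_pos hb
  -- x ≠ 0
  have hx0 : x ≠ 0 := by
    rintro rfl
    apply hX
    have hsub : {y : X | ∃ t ∈ Set.Icc (1 : ℝ) b, ∃ z : ℂ, ‖z‖ = 1 ∧
        ∃ n : ℕ, y = ((t : ℂ) * z) • (T ^ n) (0 : X)} ⊆ {(0 : X)} := by
      rintro w ⟨t, ht, z, hz, n, rfl⟩
      simp
    have hd : Dense ({(0 : X)} : Set X) := hx.mono hsub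
    have hsgl : ∀ p : X, p = 0 := by
      intro p
      have := hd.closure_eq
      rw [isClosed_singleton.closure_eq] at this
      have : p ∈ ({(0 : X)} : Set X) := this ▸ Set.mem_univ p
      simpa using this
    have : Subsingleton X := ⟨fun a c => by rw [hsgl a, hsgl c]⟩
    infer_instance
  -- the trap from the exceptional-set hypothesis
  have htrap : ∀ s : ℝ, 1 ≤ s → s ≤ b → ((s : ℝ) : ℂ) • x ∈ Ecl T x → s = 1 ∨ s = b := by
    intro s h1 h2 hs
    have hmem : ((s : ℝ) : ℂ) • x ∈
        closure {y : X | ∃ z : ℂ, ‖z‖ = 1 ∧ ∃ n : ℕ, y = z • (T ^ n) x} ∩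
        {y : X | ∃ t ∈ Set.Icc (1 : ℝ) b, ∃ z : ℂ, ‖z‖ = 1 ∧ y = ((t : ℂ) * z) • x} :=
      ⟨hs, ⟨s, ⟨h1, h2⟩, 1, norm_one, by rw [mul_one]⟩⟩
    rw [hexc] at hmem
    have hspos : (0 : ℝ) < s := lt_of_lt_of_le one_pos h1
    rcases hmem with ⟨z, hz, hzx⟩ | ⟨z, hz, hzx⟩
    · left
      have h0 : (((s : ℝ) : ℂ) - z) • x = 0 := by rw [sub_smul, ← hzx, sub_self]
      have hz' : ((s : ℝ) : ℂ) = z := by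
        rcases smul_eq_zero.1 h0 with h | h
        · exact sub_eq_zero.1 h
        · exact absurd h hx0
      have hnorm : ‖((s : ℝ) : ℂ)‖ = 1 := hz' ▸ hz
      rw [Complex.norm_real, Real.norm_eq_abs, abs_of_pos hspos] at hnorm
      exact hnorm
    · right
      have h0 : (((s : ℝ) : ℂ) - (b : ℂ) * z) • x = 0 := by rw [sub_smul, ← hzx, sub_self]
      have hz' : ((s : ℝ) : ℂ) = (b : ℂ) * z := by
        rcases smul_eq_zero.1 h0 with h | h
        · exact sub_eq_zero.1 h
        · exact absurd h hx0
      have hnorm : ‖((s : ℝ) : ℂ)‖ = ‖(b : ℂ) * z‖ := by rw [hz']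
      rw [Complex.norm_real, Real.norm_eq_abs, abs_of_pos hspos, norm_mul, hz,
        Complex.norm_real, Real.norm_eq_abs, abs_of_pos hb0, mul_one] at hnorm
      exact hnorm
  -- b ∈ Λx
  have hbmem : ((b : ℝ) : ℂ) • x ∈ Ecl T x := by
    have hm : ((b : ℝ) : ℂ) • x ∈ {y : X | ∃ z : ℂ, ‖z‖ = 1 ∧ y = z • x} ∪
        {y : X | ∃ z : ℂ, ‖z‖ = 1 ∧ y = ((b : ℂ) * z) • x} :=
      Or.inr ⟨1, norm_one, by rw [mul_one]⟩
    rw [← hexc] at hm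
    exact hm.1
  -- Λx is multiplicative
  have hmulx : ∀ s u : ℝ, ((s : ℝ) : ℂ) • x ∈ Ecl T x → ((u : ℝ) : ℂ) • x ∈ Ecl T x →
      ((s * u : ℝ) : ℂ) • x ∈ Ecl T x := by
    intro s u hs hu
    have := smul_mem_Ecl hs hu
    rwa [smul_smul, ← Complex.ofReal_mul] at this
  -- the interval-hitting property for x and y
  have hPx : ∀ s : ℝ, 0 < s → ∃ τ : ℝ, 0 < τ ∧ s / b ≤ τ ∧ τ ≤ s ∧
      ((τ : ℝ) : ℂ) • x ∈ Ecl T x := by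
    intro s hs
    obtain ⟨t, ht, hmem⟩ := exists_scale hb hx (((s : ℝ) : ℂ) • x)
    have ht0 : (0 : ℝ) < t := lt_of_lt_of_le one_pos ht.1
    refine ⟨s / t, by positivity, ?_, ?_, ?_⟩
    · gcongr
      exact ht.2
    · exact div_le_self hs.le ht.1
    · rw [div_eq_inv_mul, Complex.ofReal_mul, mul_smul]
      exact hmem
  have hPy : ∀ s : ℝ, 0 < s → ∃ τ : ℝ, 0 < τ ∧ s / b ≤ τ ∧ τ ≤ s ∧
      ((τ : ℝ) : ℂ) • y ∈ Ecl T y := by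
    intro s hs
    obtain ⟨t, ht, hmem⟩ := exists_scale hb hy (((s : ℝ) : ℂ) • y)
    have ht0 : (0 : ℝ) < t := lt_of_lt_of_le one_pos ht.1
    refine ⟨s / t, by positivity, ?_, ?_, ?_⟩
    · gcongr
      exact ht.2
    · exact div_le_self hs.le ht.1
    · rw [div_eq_inv_mul, Complex.ofReal_mul, mul_smul]
      exact hmem
  -- Λx ⊆ {b^n}
  have hsubx : ∀ s : ℝ, 0 < s → ((s : ℝ) : ℂ) • x ∈ Ecl T x → ∃ n : ℤ, s = b ^ n :=
    semigroup_subset_zpow (Λ := fun s : ℝ => ((s : ℝ) : ℂ) • x ∈ Ecl T x)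
      hb hbmem hmulx htrap hPx
  -- transfer to y
  obtain ⟨t, ht, hu⟩ := exists_scale hb hx y
  obtain ⟨r, hr, hv⟩ := exists_scale hb hy x
  have ht0 : (0 : ℝ) < t := lt_of_lt_of_le one_pos ht.1
  have hr0 : (0 : ℝ) < r := lt_of_lt_of_le one_pos hr.1
  have hFE : ∀ w, w ∈ Ecl T y → ((t⁻¹ : ℝ) : ℂ) • w ∈ Ecl T x := fun w hw =>
    Ecl_mono hu (smul_mem_Ecl_smul _ hw)
  obtain ⟨m, hm⟩ : ∃ m : ℤ, t⁻¹ * r⁻¹ = b ^ m := by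
    apply hsubx _ (by positivity)
    have h := hFE _ hv
    rwa [smul_smul, ← Complex.ofReal_mul] at h
  have hsuby : ∀ s : ℝ, 0 < s → ((s : ℝ) : ℂ) • y ∈ Ecl T y → ∃ n : ℤ, s = b ^ n := by
    intro s hs hsy
    have h1 : ((s : ℝ) : ℂ) • (((r⁻¹ : ℝ) : ℂ) • x) ∈ Ecl T y := smul_mem_Ecl hsy hv
    have h2 := hFE _ h1
    rw [smul_smul, smul_smul, ← Complex.ofReal_mul, ← Complex.ofReal_mul] at h2
    obtain ⟨m', hm'⟩ := hsubx _ (by positivity) h2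
    refine ⟨m' - m, ?_⟩
    have hbz : (b : ℝ) ≠ 0 := hb0.ne'
    rw [zpow_sub₀ hbz, ← hm', ← hm]
    field_simp
  -- all powers of b are in Λy
  have hzy : ∀ n : ℤ, ((b ^ n : ℝ) : ℂ) • y ∈ Ecl T y :=
    zpow_mem_of_P (Λ := fun s : ℝ => ((s : ℝ) : ℂ) • y ∈ Ecl T y) hb hsuby hPy
  -- conclusion
  ext w
  simp only [Set.mem_inter_iff, Set.mem_setOf_eq]
  constructor
  · rintro ⟨hw1, s, hs, rfl⟩
    obtain ⟨n, rfl⟩ := hsuby s hs hw1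
    exact ⟨n, rfl⟩
  · rintro ⟨n, rfl⟩
    exact ⟨hzy n, ⟨b ^ n, zpow_pos hb0 n, rfl⟩⟩
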